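/- For every φ ∈ P, the E^{20}-projection of the curvature action on φ is given by the symplectic Ricci tensor: q^{20}(R^Sφ) = (𝕚/(2l)) Σ_{i,j,k,m} σ^{ij} ω_{km} ε^k∧ε^m ⊗ e_{ij}·φ, where σ^{ij} := Σ_{a,b} ω^{ia}ω^{jb}σ_{ab}. (This is the paper's Corollary 11, first formula, with the normalization factor 1/(2(l+1)) of σ̃ correctly carried through.) -/

import Mathlib

noncomputable section

open Finset MvPolynomial

/-- The space of symplectic spinors: complex polynomials in `l` variables. -/
abbrev Pol (l : ℕ) := MvPolynomial (Fin l) ℂ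

/-- Components `ω_{ij}` of the standard symplectic form on `ℝ^{2l}`. -/
def om (l : ℕ) (i j : Fin (2*l)) : ℝ :=
  if (j : ℕ) = (i : ℕ) + l then 1 else if (i : ℕ) = (j : ℕ) + l then -1 else 0

/-- Components `ω^{ij}`, defined by `Σ_k ω_{ik} ω^{jk} = δ_i^j`. -/
def omUp (l : ℕ) (i j : Fin (2*l)) : ℝ :=
  if (j : ℕ) = (i : ℕ) + l then 1 else if (i : ℕ) = (j : ℕ) + l then -1 else 0

/-- Symplectic Clifford multiplication by a basis vector `e_i`. -/
def cliff (l : ℕ) (i : Fin (2*l)) (f : Pol l) : Pol l :=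
  if h : (i : ℕ) < l then Complex.I • (MvPolynomial.X (⟨(i : ℕ), h⟩ : Fin l) * f)
  else MvPolynomial.pderiv (⟨(i : ℕ) - l, by have := i.isLt; omega⟩ : Fin l) f

/-- Symplectic Clifford multiplication by an arbitrary vector, extended ℝ-bilinearly. -/
def cliffV (l : ℕ) (v : Fin (2*l) → ℝ) (f : Pol l) : Pol l :=
  ∑ i, ((v i : ℝ) : ℂ) • cliff l i f

/-- Symplectic-spinor-valued `r`-forms (as functions of their `r` vector arguments). -/
abbrev Form (l r : ℕ) := (Fin r → (Fin (2*l) → ℝ)) → Pol l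

/-- The standard basis vector `e_i` of `ℝ^{2l}`. -/
def basisVec (l : ℕ) (i : Fin (2*l)) : Fin (2*l) → ℝ := Pi.single i 1

/-- The operator `X`: `(Xφ)(v_1,…,v_{r+1}) = −Σ_a (−1)^{a+1} v_a · φ(v_1,…,v̂_a,…,v_{r+1})`. -/
def Xop (l r : ℕ) (φ : Form l r) : Form l (r+1) :=
  fun v => -∑ a : Fin (r+1), ((-1 : ℂ)^(a : ℕ)) • cliffV l (v a) (φ (fun b => v (a.succAbove b)))

/-- The operator `Y`: `(Yφ)(v_1,…,v_r) = Σ_{i,j} ω^{ij} e_j · φ(e_i, v_1,…,v_r)`. -/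
def Yop (l r : ℕ) (φ : Form l (r+1)) : Form l r :=
  fun v => ∑ i, ∑ j, ((omUp l i j : ℝ) : ℂ) • cliff l j (φ (Fin.cons (basisVec l i) v))

/-- The operator `H = XY + YX` (on 0-forms `Y` vanishes, so there `H = YX`). -/
def Hop (l : ℕ) : {r : ℕ} → Form l r → Form l r
  | 0, φ => Yop l 0 (Xop l 0 φ)
  | (r+1), φ => Xop l r (Yop l r φ) + Yop l (r+1) (Xop l (r+1) φ)

/-- `X²Y²` on spinor-valued 2-forms. -/
def XXYY (l : ℕ) (φ : Form l 2) : Form l 2 := Xop l 1 (Xop l 0 (Yop l 0 (Yop l 1 φ)))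

/-- `XY` on spinor-valued 2-forms. -/
def XY2 (l : ℕ) (φ : Form l 2) : Form l 2 := Xop l 1 (Yop l 1 φ)

/-- The projection `q^{20} = (1/l) X²Y²`. -/
def q20 (l : ℕ) (φ : Form l 2) : Form l 2 := ((l : ℂ))⁻¹ • XXYY l φ

/-- The projection `q^{21} = (𝕚/(1−l)) (XY − (𝕚/l) X²Y²)`. -/
def q21 (l : ℕ) (φ : Form l 2) : Form l 2 :=
  (Complex.I / (1 - (l : ℂ))) • (XY2 l φ - (Complex.I / (l : ℂ)) • XXYY l φ)

/-- The projection `q^{22} = Id − q^{20} − q^{21}`. -/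
def q22 (l : ℕ) (φ : Form l 2) : Form l 2 := φ - q20 l φ - q21 l φ

/-- The spinor-valued 2-form `c · ε^k ∧ ε^m ⊗ s`. -/
def w2 (l : ℕ) (c : ℝ) (k m : Fin (2*l)) (s : Pol l) : Form l 2 :=
  fun v => ((c * (v 0 k * v 1 m - v 0 m * v 1 k) : ℝ) : ℂ) • s

/-- The symplectic Ricci tensor `σ_{ij} = Σ_{k,m} ω^{km} R_{mjki}`. -/
def ric (l : ℕ) (R : Fin (2*l) → Fin (2*l) → Fin (2*l) → Fin (2*l) → ℝ)
    (i j : Fin (2*l)) : ℝ :=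
  ∑ k, ∑ m, omUp l k m * R m j k i

/-- `σ̃_{ijkl}` built from a symmetric tensor `σ`. -/
def st (l : ℕ) (σ : Fin (2*l) → Fin (2*l) → ℝ) (i j k m : Fin (2*l)) : ℝ :=
  (1/(2*((l : ℝ)+1))) * (om l i m * σ j k - om l i k * σ j m
    + om l j m * σ i k - om l j k * σ i m + 2 * σ i j * om l k m)

/-- The symplectic Weyl tensor `W = R − σ̃`. -/
def weyl (l : ℕ) (R : Fin (2*l) → Fin (2*l) → Fin (2*l) → Fin (2*l) → ℝ)
    (i j k m : Fin (2*l)) : ℝ :=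
  R i j k m - st l (ric l R) i j k m

/-- Raising all four indices: `T^{ijkm} = Σ ω^{ia}ω^{jb}ω^{kc}ω^{md} T_{abcd}`. -/
def upT (l : ℕ) (T : Fin (2*l) → Fin (2*l) → Fin (2*l) → Fin (2*l) → ℝ)
    (i j k m : Fin (2*l)) : ℝ :=
  ∑ a, ∑ b, ∑ c, ∑ d, omUp l i a * omUp l j b * omUp l k c * omUp l m d * T a b c d

/-- Raising both indices of a 2-tensor: `σ^{ij} = Σ ω^{ia}ω^{jb} σ_{ab}`. -/
def up2 (l : ℕ) (σ : Fin (2*l) → Fin (2*l) → ℝ) (i j : Fin (2*l)) : ℝ :=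
  ∑ a, ∑ b, omUp l i a * omUp l j b * σ a b

/-- The spinor-valued 2-form `(𝕚/2) Σ T^{ij}_{kl} ε^k ∧ ε^l ⊗ e_{ij}·φ` built from a
4-tensor `T` (used for `R^S φ`, `σ^S φ` and `W^S φ`). -/
def curvS (l : ℕ) (T : Fin (2*l) → Fin (2*l) → Fin (2*l) → Fin (2*l) → ℝ)
    (φ : Pol l) : Form l 2 :=
  (Complex.I/2) • ∑ i, ∑ j, ∑ k, ∑ m,
    w2 l (∑ a, ∑ b, omUp l i a * omUp l j b * T a b k m) k m (cliff l i (cliff l j φ))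

/-- The spinor-valued 2-form `Σ_{i,j,k,d,m} T^{ijk}_d ε^m ∧ ε^d ⊗ e_{mkij}·φ`. -/
def mixS (l : ℕ) (T : Fin (2*l) → Fin (2*l) → Fin (2*l) → Fin (2*l) → ℝ)
    (φ : Pol l) : Form l 2 :=
  ∑ i, ∑ j, ∑ k, ∑ d, ∑ m,
    w2 l (∑ a, ∑ b, ∑ c, omUp l i a * omUp l j b * omUp l k c * T a b c d) m d
      (cliff l m (cliff l k (cliff l i (cliff l j φ))))


-- ===================== auxiliary lemmas =====================

lemma pderiv_comm' {σ R : Type*} [CommSemiring R] [DecidableEq σ] (a b : σ) (f : MvPolynomial σ R) :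
    pderiv a (pderiv b f) = pderiv b (pderiv a f) := by
  induction f using MvPolynomial.induction_on with
  | C c => simp
  | add p q hp hq => simp [hp, hq]
  | mul_X p s hp =>
    simp only [pderiv_mul, hp, pderiv_X, map_add, Pi.single_apply, apply_ite (pderiv a),
      apply_ite (pderiv b)]
    split_ifs <;> (try simp) <;> ring

def cliffL (l : ℕ) (i : Fin (2*l)) : Pol l →ₗ[ℂ] Pol l where
  toFun := cliff l i
  map_add' f g := by
    unfold cliff; split
    · rw [mul_add, smul_add]
    · exact map_add _ _ _
  map_smul' c f := by
    unfold cliff; split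
    · rw [mul_smul_comm, smul_comm, RingHom.id_apply]
    · rw [RingHom.id_apply, Derivation.map_smul]

lemma cliff_eq (l : ℕ) (i : Fin (2*l)) (f : Pol l) : cliff l i f = cliffL l i f := rfl

lemma cliff_smul (l : ℕ) (i : Fin (2*l)) (c : ℂ) (f : Pol l) :
    cliff l i (c • f) = c • cliff l i f := by
  rw [cliff_eq, cliff_eq, map_smul]

lemma cliff_sum {ι : Type*} (l : ℕ) (i : Fin (2*l)) (s : Finset ι) (f : ι → Pol l) :
    cliff l i (∑ x ∈ s, f x) = ∑ x ∈ s, cliff l i (f x) := by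
  simp only [cliff_eq]; exact map_sum _ _ _

lemma cliff_neg (l : ℕ) (i : Fin (2*l)) (f : Pol l) : cliff l i (-f) = -cliff l i f := by
  simp only [cliff_eq]; exact map_neg _ _

lemma cliff_comm (l : ℕ) (i j : Fin (2*l)) (f : Pol l) :
    cliff l i (cliff l j f) = cliff l j (cliff l i f) - (Complex.I * ((om l i j : ℝ) : ℂ)) • f := by
  have hi2 := i.isLt
  have hj2 := j.isLt
  unfold cliff om
  by_cases hi : (i : ℕ) < l <;> by_cases hj : (j : ℕ) < l <;>
    simp only [dif_pos, dif_neg, hi, hj, dite_true, dite_false]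
  · rw [if_neg (by omega), if_neg (by omega)]
    simp only [Complex.ofReal_zero, mul_zero, zero_smul, sub_zero, mul_smul_comm]
    rw [smul_smul, smul_smul, mul_left_comm (X _)]
  · -- i < l ≤ j
    by_cases h : (j:ℕ) = (i:ℕ) + l
    · rw [if_pos h]
      have : (⟨(j:ℕ) - l, by omega⟩ : Fin l) = ⟨(i:ℕ), hi⟩ := by
        apply Fin.ext; simp; omega
      rw [this]
      rw [Derivation.map_smul, pderiv_mul, pderiv_X_self, one_mul]
      simp only [smul_add, Complex.ofReal_one, mul_one]
      module
    · rw [if_neg h, if_neg (by omega)]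
      have hne : (⟨(i:ℕ), hi⟩ : Fin l) ≠ (⟨(j:ℕ) - l, by omega⟩ : Fin l) := by
        simp only [ne_eq, Fin.mk.injEq]; omega
      rw [Derivation.map_smul, pderiv_mul, pderiv_X_of_ne hne, zero_mul, zero_add]
      simp
  · -- j < l ≤ i
    by_cases h : (i:ℕ) = (j:ℕ) + l
    · rw [if_neg (by omega), if_pos h]
      have : (⟨(i:ℕ) - l, by omega⟩ : Fin l) = ⟨(j:ℕ), hj⟩ := by
        apply Fin.ext; simp; omega
      rw [this]
      rw [Derivation.map_smul, pderiv_mul, pderiv_X_self, one_mul]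
      simp only [smul_add, Complex.ofReal_neg, Complex.ofReal_one, mul_neg, mul_one]
      module
    · rw [if_neg (by omega), if_neg h]
      have hne : (⟨(j:ℕ), hj⟩ : Fin l) ≠ (⟨(i:ℕ) - l, by omega⟩ : Fin l) := by
        simp only [ne_eq, Fin.mk.injEq]; omega
      rw [Derivation.map_smul, pderiv_mul, pderiv_X_of_ne hne, zero_mul, zero_add]
      simp
  · rw [if_neg (by omega), if_neg (by omega)]
    simp [pderiv_comm']

lemma om_antisymm (l : ℕ) (i j : Fin (2*l)) : om l i j = - om l j i := by
  have hi2 := i.isLt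
  unfold om
  split_ifs <;> first | (exfalso; omega) | norm_num

lemma omUp_antisymm (l : ℕ) (i j : Fin (2*l)) : omUp l i j = - omUp l j i :=
  om_antisymm l i j

lemma om_contract (l : ℕ) (i j : Fin (2*l)) :
    ∑ q, om l i q * omUp l j q = if i = j then 1 else 0 := by
  have hi2 := i.isLt
  have hj2 := j.isLt
  by_cases h : (i:ℕ) < l
  · rw [Finset.sum_eq_single (⟨(i:ℕ)+l, by omega⟩ : Fin (2*l))]
    · unfold om omUp
      simp only [Fin.ext_iff]
      split_ifs <;> first | (exfalso; omega) | norm_num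
    · intro b _ hb
      have hb' : (b:ℕ) ≠ (i:ℕ)+l := fun hh => hb (Fin.ext (by simpa using hh))
      unfold om
      rw [if_neg hb', if_neg (by omega), zero_mul]
    · intro hni; exact absurd (Finset.mem_univ _) hni
  · rw [Finset.sum_eq_single (⟨(i:ℕ)-l, by omega⟩ : Fin (2*l))]
    · unfold om omUp
      simp only [Fin.ext_iff]
      split_ifs <;> first | (exfalso; omega) | norm_num
    · intro b _ hb
      have hb' : (i:ℕ) ≠ (b:ℕ)+l := fun hh => hb (Fin.ext (by simp; omega))
      unfold om
      rw [if_neg (by omega), if_neg hb', zero_mul]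
    · intro hni; exact absurd (Finset.mem_univ _) hni

lemma antisym_collapse (l : ℕ) (G : Fin (2*l) → Fin (2*l) → ℝ)
    (hG : ∀ q d, G q d = - G d q) (ψ : Pol l) :
    ∑ q, ∑ d, ((G q d : ℝ) : ℂ) • cliff l d (cliff l q ψ)
      = ((Complex.I/2) * ((∑ q, ∑ d, G q d * om l q d : ℝ) : ℂ)) • ψ := by
  have copy2 : ∑ q, ∑ d, ((G q d : ℝ) : ℂ) • cliff l d (cliff l q ψ)
      = ∑ q, ∑ d, ((-(G q d) : ℝ) : ℂ) • cliff l q (cliff l d ψ) := by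
    rw [Finset.sum_comm]
    exact Finset.sum_congr rfl fun a _ => Finset.sum_congr rfl fun b _ => by rw [hG b a]
  have main : ∀ q d : Fin (2*l),
      ((G q d : ℝ) : ℂ) • cliff l d (cliff l q ψ) + ((-(G q d) : ℝ) : ℂ) • cliff l q (cliff l d ψ)
        = ((G q d * om l q d : ℝ) : ℂ) • (Complex.I • ψ) := by
    intro q d
    rw [cliff_comm l d q ψ, om_antisymm l d q]
    push_cast
    module
  have hsum : (∑ q, ∑ d, ((G q d : ℝ) : ℂ) • cliff l d (cliff l q ψ))
      + (∑ q, ∑ d, ((G q d : ℝ) : ℂ) • cliff l d (cliff l q ψ))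
      = ((∑ q, ∑ d, G q d * om l q d : ℝ) : ℂ) • (Complex.I • ψ) := by
    nth_rewrite 2 [copy2]
    rw [← Finset.sum_add_distrib]
    push_cast
    rw [Finset.sum_smul]
    refine Finset.sum_congr rfl fun q _ => ?_
    rw [← Finset.sum_add_distrib, Finset.sum_smul]
    refine Finset.sum_congr rfl fun d _ => ?_
    have := main q d
    push_cast at this ⊢
    exact this
  refine smul_right_injective (Pol l) (two_ne_zero (α := ℂ)) ?_
  show (2:ℂ) • _ = (2:ℂ) • _
  rw [two_smul, hsum, smul_smul, smul_smul]
  congr 1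
  push_cast
  ring

-- generic sum swap for four nested sums
lemma sum_swap4 {M : Type*} [AddCommMonoid M] {α β γ δ : Type*}
    [Fintype α] [Fintype β] [Fintype γ] [Fintype δ] (f : α → β → γ → δ → M) :
    ∑ k, ∑ m, ∑ q, ∑ d, f k m q d = ∑ q, ∑ d, ∑ k, ∑ m, f k m q d := by
  calc ∑ k, ∑ m, ∑ q, ∑ d, f k m q d
      = ∑ k, ∑ q, ∑ m, ∑ d, f k m q d :=
        Finset.sum_congr rfl fun k _ => Finset.sum_comm
    _ = ∑ q, ∑ k, ∑ m, ∑ d, f k m q d := Finset.sum_comm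
    _ = ∑ q, ∑ k, ∑ d, ∑ m, f k m q d :=
        Finset.sum_congr rfl fun q _ => Finset.sum_congr rfl fun k _ => Finset.sum_comm
    _ = ∑ q, ∑ d, ∑ k, ∑ m, f k m q d :=
        Finset.sum_congr rfl fun q _ => Finset.sum_comm
-- ===================== curvature index algebra =====================

section curvAlg
variable {l : ℕ} (R : Fin (2*l) → Fin (2*l) → Fin (2*l) → Fin (2*l) → ℝ)

lemma sum_zero3 (h3 : ∀ i j k m, R i j k m = R j i k m) (a b : Fin (2*l)) :
    ∑ k, ∑ m, omUp l k m * R k m a b = 0 := by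
  have key : (∑ k, ∑ m, omUp l k m * R k m a b)
      = - ∑ k, ∑ m, omUp l k m * R k m a b := by
    nth_rewrite 1 [Finset.sum_comm]
    rw [← Finset.sum_neg_distrib]
    refine Finset.sum_congr rfl fun x _ => ?_
    rw [← Finset.sum_neg_distrib]
    refine Finset.sum_congr rfl fun y _ => ?_
    rw [omUp_antisymm l y x, h3 y x a b]
    ring
  linarith

lemma ric_eq (h1 : ∀ i j k m, R i j k m = - R i j m k) (a b : Fin (2*l)) :
    ric l R a b = ∑ k, ∑ m, omUp l k m * R k b a m := by
  unfold ric
  rw [Finset.sum_comm]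
  refine Finset.sum_congr rfl fun x _ => Finset.sum_congr rfl fun y _ => ?_
  rw [omUp_antisymm l y x, h1 x b y a]
  ring

lemma trace_symm (h1 : ∀ i j k m, R i j k m = - R i j m k)
    (h2 : ∀ i j k m, R i j k m + R i k m j + R i m j k = 0)
    (h3 : ∀ i j k m, R i j k m = R j i k m) (a b : Fin (2*l)) :
    ∑ k, ∑ m, omUp l k m * R k a b m = ∑ k, ∑ m, omUp l k m * R k b a m := by
  have h0 := sum_zero3 R h3 a b
  have expand : ∀ k m : Fin (2*l), omUp l k m * R k a b m
      = omUp l k m * R k b a m - omUp l k m * R k m a b := by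
    intro k m
    have e2 := h2 k a b m
    have e1 := h1 k b m a
    linear_combination omUp l k m * e2 - omUp l k m * e1
  calc ∑ k, ∑ m, omUp l k m * R k a b m
      = ∑ k, ∑ m, (omUp l k m * R k b a m - omUp l k m * R k m a b) :=
        Finset.sum_congr rfl fun k _ => Finset.sum_congr rfl fun m _ => expand k m
    _ = (∑ k, ∑ m, omUp l k m * R k b a m) - ∑ k, ∑ m, omUp l k m * R k m a b := by
        rw [← Finset.sum_sub_distrib]
        exact Finset.sum_congr rfl fun k _ => Finset.sum_sub_distrib _ _
    _ = ∑ k, ∑ m, omUp l k m * R k b a m := by rw [h0, sub_zero]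

lemma T0 (h1 : ∀ i j k m, R i j k m = - R i j m k)
    (h2 : ∀ i j k m, R i j k m + R i k m j + R i m j k = 0)
    (h3 : ∀ i j k m, R i j k m = R j i k m) (a b : Fin (2*l)) :
    ∑ k, ∑ m, omUp l k m * R a b k m = 2 * ric l R a b := by
  have hswap : (∑ k, ∑ m, omUp l k m * R a m b k) = ∑ k, ∑ m, omUp l k m * R a k m b := by
    rw [Finset.sum_comm]
    refine Finset.sum_congr rfl fun x _ => Finset.sum_congr rfl fun y _ => ?_
    rw [omUp_antisymm l y x, h1 a x b y]
    ring
  have expand : ∀ k m : Fin (2*l), omUp l k m * R a b k m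
      = - (omUp l k m * R a k m b) - omUp l k m * R a m b k := by
    intro k m
    have e2 := h2 a b k m
    linear_combination omUp l k m * e2
  have step1 : ∑ k, ∑ m, omUp l k m * R a b k m
      = - 2 * ∑ k, ∑ m, omUp l k m * R a k m b := by
    calc ∑ k, ∑ m, omUp l k m * R a b k m
        = ∑ k, ∑ m, (- (omUp l k m * R a k m b) - omUp l k m * R a m b k) :=
          Finset.sum_congr rfl fun k _ => Finset.sum_congr rfl fun m _ => expand k m
      _ = (∑ k, ∑ m, - (omUp l k m * R a k m b)) - ∑ k, ∑ m, omUp l k m * R a m b k := by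
          rw [← Finset.sum_sub_distrib]
          exact Finset.sum_congr rfl fun k _ => Finset.sum_sub_distrib _ _
      _ = - (∑ k, ∑ m, omUp l k m * R a k m b) - ∑ k, ∑ m, omUp l k m * R a k m b := by
          rw [hswap]
          congr 1
          rw [← Finset.sum_neg_distrib]
          exact Finset.sum_congr rfl fun k _ => Finset.sum_neg_distrib _
      _ = - 2 * ∑ k, ∑ m, omUp l k m * R a k m b := by ring
  have step2 : ∑ k, ∑ m, omUp l k m * R a k m b
      = - ∑ k, ∑ m, omUp l k m * R k a b m := by
    rw [← Finset.sum_neg_distrib]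
    refine Finset.sum_congr rfl fun k _ => ?_
    rw [← Finset.sum_neg_distrib]
    refine Finset.sum_congr rfl fun m _ => ?_
    rw [h1 a k m b, h3 a k b m]
    ring
  rw [step1, step2, trace_symm R h1 h2 h3 a b, ← ric_eq R h1 a b]
  ring

lemma P1 (l : ℕ) (k m : Fin (2*l)) :
    ∑ q, ∑ d, (omUp l k q * omUp l m d - omUp l m q * omUp l k d) * om l q d
      = 2 * omUp l k m := by
  have A : ∀ q : Fin (2*l), (∑ d, omUp l m d * om l q d) = if q = m then 1 else 0 := by
    intro q
    rw [← om_contract l q m]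
    exact Finset.sum_congr rfl fun d _ => by rw [show omUp l m d = om l m d from rfl]; ring
  have B : ∀ q : Fin (2*l), (∑ d, omUp l k d * om l q d) = if q = k then 1 else 0 := by
    intro q
    rw [← om_contract l q k]
    exact Finset.sum_congr rfl fun d _ => by rw [show omUp l k d = om l k d from rfl]; ring
  have split : ∀ q : Fin (2*l),
      (∑ d, (omUp l k q * omUp l m d - omUp l m q * omUp l k d) * om l q d)
        = omUp l k q * (if q = m then 1 else 0) - omUp l m q * (if q = k then 1 else 0) := by
    intro q
    rw [← A q, ← B q, Finset.mul_sum, Finset.mul_sum, ← Finset.sum_sub_distrib]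
    exact Finset.sum_congr rfl fun d _ => by ring
  calc ∑ q, ∑ d, (omUp l k q * omUp l m d - omUp l m q * omUp l k d) * om l q d
      = ∑ q, (omUp l k q * (if q = m then 1 else 0) - omUp l m q * (if q = k then 1 else 0)) :=
        Finset.sum_congr rfl fun q _ => split q
    _ = (∑ q, omUp l k q * (if q = m then 1 else 0))
          - ∑ q, omUp l m q * (if q = k then 1 else 0) := Finset.sum_sub_distrib _ _
    _ = omUp l k m - omUp l m k := by
        simp [mul_ite, Finset.sum_ite_eq']
    _ = 2 * omUp l k m := by rw [omUp_antisymm l m k]; ring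

lemma Gident (h1 : ∀ i j k m, R i j k m = - R i j m k)
    (h2 : ∀ i j k m, R i j k m + R i k m j + R i m j k = 0)
    (h3 : ∀ i j k m, R i j k m = R j i k m) (i j : Fin (2*l)) :
    ∑ q, ∑ d, (∑ k, ∑ m, (∑ a, ∑ b, omUp l i a * omUp l j b * R a b k m)
        * (omUp l k q * omUp l m d - omUp l m q * omUp l k d)) * om l q d
      = 4 * up2 l (ric l R) i j := by
  have e1 : (∑ q, ∑ d, (∑ k, ∑ m, (∑ a, ∑ b, omUp l i a * omUp l j b * R a b k m)
        * (omUp l k q * omUp l m d - omUp l m q * omUp l k d)) * om l q d)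
      = ∑ q, ∑ d, ∑ k, ∑ m, ((∑ a, ∑ b, omUp l i a * omUp l j b * R a b k m)
        * (omUp l k q * omUp l m d - omUp l m q * omUp l k d)) * om l q d := by
    refine Finset.sum_congr rfl fun q _ => Finset.sum_congr rfl fun d _ => ?_
    rw [Finset.sum_mul]
    exact Finset.sum_congr rfl fun k _ => Finset.sum_mul _ _ _
  have lhs1 : (∑ q, ∑ d, (∑ k, ∑ m, (∑ a, ∑ b, omUp l i a * omUp l j b * R a b k m)
        * (omUp l k q * omUp l m d - omUp l m q * omUp l k d)) * om l q d)
      = ∑ k, ∑ m, (∑ a, ∑ b, omUp l i a * omUp l j b * R a b k m) * (2 * omUp l k m) := by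
    rw [e1, ← sum_swap4 (fun k m q d => ((∑ a, ∑ b, omUp l i a * omUp l j b * R a b k m)
        * (omUp l k q * omUp l m d - omUp l m q * omUp l k d)) * om l q d)]
    refine Finset.sum_congr rfl fun k _ => Finset.sum_congr rfl fun m _ => ?_
    rw [← P1 l k m, Finset.mul_sum]
    refine Finset.sum_congr rfl fun q _ => ?_
    rw [Finset.mul_sum]
    exact Finset.sum_congr rfl fun d _ => by ring
  have swap1 : ∑ k, ∑ m, (∑ a, ∑ b, omUp l i a * omUp l j b * R a b k m) * (2 * omUp l k m)
      = ∑ k, ∑ m, ∑ a, ∑ b, omUp l i a * omUp l j b * R a b k m * (2 * omUp l k m) := by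
    refine Finset.sum_congr rfl fun k _ => Finset.sum_congr rfl fun m _ => ?_
    rw [Finset.sum_mul]
    refine Finset.sum_congr rfl fun a _ => ?_
    rw [Finset.sum_mul]
  rw [lhs1, swap1,
    sum_swap4 (fun k m a b => omUp l i a * omUp l j b * R a b k m * (2 * omUp l k m))]
  unfold up2
  rw [Finset.mul_sum]
  refine Finset.sum_congr rfl fun a _ => ?_
  rw [Finset.mul_sum]
  refine Finset.sum_congr rfl fun b _ => ?_
  have hT := T0 R h1 h2 h3 a b
  calc ∑ k, ∑ m, omUp l i a * omUp l j b * R a b k m * (2 * omUp l k m)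
      = (2 * (omUp l i a * omUp l j b)) * ∑ k, ∑ m, omUp l k m * R a b k m := by
        rw [Finset.mul_sum]
        refine Finset.sum_congr rfl fun k _ => ?_
        rw [Finset.mul_sum]
        exact Finset.sum_congr rfl fun m _ => by ring
    _ = 4 * (omUp l i a * omUp l j b * ric l R a b) := by rw [hT]; ring

end curvAlg

-- ===================== form-level computations =====================

lemma cons_one {l : ℕ} (b : Fin (2*l) → ℝ) (u : Fin 1 → Fin (2*l) → ℝ) :
    (Fin.cons b u : Fin 2 → Fin (2*l) → ℝ) 1 = u 0 := rfl

lemma sum_swap3 {M : Type*} [AddCommMonoid M] {α β γ : Type*}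
    [Fintype α] [Fintype β] [Fintype γ] (f : α → β → γ → M) :
    ∑ a, ∑ b, ∑ c, f a b c = ∑ b, ∑ c, ∑ a, f a b c := by
  rw [Finset.sum_comm]
  exact Finset.sum_congr rfl fun b _ => Finset.sum_comm

lemma sum_cycle4 {M : Type*} [AddCommMonoid M] {α β γ δ : Type*}
    [Fintype α] [Fintype β] [Fintype γ] [Fintype δ] (f : α → β → γ → δ → M) :
    ∑ a, ∑ b, ∑ c, ∑ d, f a b c d = ∑ b, ∑ c, ∑ d, ∑ a, f a b c d := by
  rw [Finset.sum_comm]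
  exact Finset.sum_congr rfl fun b _ => sum_swap3 _

lemma fold1 {M : Type*} [AddCommMonoid M] [Module ℂ M] {α : Type*} [Fintype α]
    (c : α → ℝ) (x : M) :
    ∑ a, ((c a : ℝ) : ℂ) • x = ((∑ a, c a : ℝ) : ℂ) • x := by
  rw [← Finset.sum_smul]
  congr 1
  push_cast
  rfl

lemma fold2 {M : Type*} [AddCommMonoid M] [Module ℂ M] {α β : Type*} [Fintype α] [Fintype β]
    (c : α → β → ℝ) (x : M) :
    ∑ a, ∑ b, ((c a b : ℝ) : ℂ) • x = ((∑ a, ∑ b, c a b : ℝ) : ℂ) • x := by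
  rw [← fold1 (fun a => ∑ b, c a b) x]
  exact Finset.sum_congr rfl fun a _ => fold1 _ _

lemma collapse_p (l : ℕ) (q k m : Fin (2*l)) (c x y : ℝ) :
    ∑ p, omUp l p q * (c * ((if k = p then (1:ℝ) else 0) * x - (if m = p then (1:ℝ) else 0) * y))
      = c * (omUp l k q * x - omUp l m q * y) := by
  have hterm : ∀ p : Fin (2*l), omUp l p q * (c * ((if k = p then (1:ℝ) else 0) * x
        - (if m = p then (1:ℝ) else 0) * y))
      = (if k = p then omUp l p q * (c*x) else 0) - (if m = p then omUp l p q * (c*y) else 0) := by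
    intro p; split_ifs <;> ring
  rw [Finset.sum_congr rfl fun p _ => hterm p, Finset.sum_sub_distrib,
    Finset.sum_ite_eq, Finset.sum_ite_eq]
  simp only [Finset.mem_univ, if_true]
  ring

lemma collapse_p2 (l : ℕ) (q d k m : Fin (2*l)) (c : ℝ) :
    ∑ p, omUp l p d * (c * (omUp l k q * (if m = p then (1:ℝ) else 0)
        - omUp l m q * (if k = p then (1:ℝ) else 0)))
      = c * (omUp l k q * omUp l m d - omUp l m q * omUp l k d) := by
  have hterm : ∀ p : Fin (2*l), omUp l p d * (c * (omUp l k q * (if m = p then (1:ℝ) else 0)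
        - omUp l m q * (if k = p then (1:ℝ) else 0)))
      = (if m = p then omUp l p d * (c * omUp l k q) else 0)
        - (if k = p then omUp l p d * (c * omUp l m q) else 0) := by
    intro p; split_ifs <;> ring
  rw [Finset.sum_congr rfl fun p _ => hterm p, Finset.sum_sub_distrib,
    Finset.sum_ite_eq, Finset.sum_ite_eq]
  simp only [Finset.mem_univ, if_true]
  ring

lemma Yop_smul (l r : ℕ) (a : ℂ) (φ : Form l (r+1)) :
    Yop l r (a • φ) = a • Yop l r φ := by
  funext v
  unfold Yop
  simp only [Pi.smul_apply, cliff_smul]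
  rw [Finset.smul_sum]
  refine Finset.sum_congr rfl fun i _ => ?_
  rw [Finset.smul_sum]
  exact Finset.sum_congr rfl fun j _ => smul_comm _ _ _

lemma Ybig (l : ℕ) (c : Fin (2*l) → Fin (2*l) → Fin (2*l) → Fin (2*l) → ℝ)
    (s : Fin (2*l) → Fin (2*l) → Pol l) (u : Fin 1 → Fin (2*l) → ℝ) :
    Yop l 1 (fun w => ∑ i, ∑ j, ∑ k, ∑ m,
        ((c i j k m * (w 0 k * w 1 m - w 0 m * w 1 k) : ℝ) : ℂ) • s i j) u
      = ∑ i, ∑ j, ∑ q, ((∑ k, ∑ m, c i j k m * (omUp l k q * u 0 m - omUp l m q * u 0 k) : ℝ) : ℂ)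
          • cliff l q (s i j) := by
  unfold Yop
  simp only [Fin.cons_zero, cons_one, cliff_sum, cliff_smul, Finset.smul_sum, smul_smul]
  rw [sum_swap4 (fun p q i j => ∑ k, ∑ m,
    (((omUp l p q : ℝ) : ℂ) * ((c i j k m * (basisVec l p k * u 0 m
      - basisVec l p m * u 0 k) : ℝ) : ℂ)) • cliff l q (s i j))]
  refine Finset.sum_congr rfl fun i _ => Finset.sum_congr rfl fun j _ => ?_
  rw [sum_cycle4 (fun p q k m => (((omUp l p q : ℝ) : ℂ) * ((c i j k m * (basisVec l p k * u 0 m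
      - basisVec l p m * u 0 k) : ℝ) : ℂ)) • cliff l q (s i j))]
  refine Finset.sum_congr rfl fun q _ => ?_
  rw [← fold2 (fun k m => c i j k m * (omUp l k q * u 0 m - omUp l m q * u 0 k))
    (cliff l q (s i j))]
  refine Finset.sum_congr rfl fun k _ => Finset.sum_congr rfl fun m _ => ?_
  rw [← Finset.sum_smul]
  congr 1
  have real : ∑ p, omUp l p q * (c i j k m * (basisVec l p k * u 0 m - basisVec l p m * u 0 k))
      = c i j k m * (omUp l k q * u 0 m - omUp l m q * u 0 k) := by
    unfold basisVec
    simp only [Pi.single_apply]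
    exact collapse_p l q k m (c i j k m) (u 0 m) (u 0 k)
  exact_mod_cast real

lemma Ysmall (l : ℕ) (c : Fin (2*l) → Fin (2*l) → Fin (2*l) → Fin (2*l) → ℝ)
    (s : Fin (2*l) → Fin (2*l) → Fin (2*l) → Pol l) (v : Fin 0 → Fin (2*l) → ℝ) :
    Yop l 0 (fun u => ∑ i, ∑ j, ∑ q,
        ((∑ k, ∑ m, c i j k m * (omUp l k q * u 0 m - omUp l m q * u 0 k) : ℝ) : ℂ) • s i j q) v
      = ∑ i, ∑ j, ∑ q, ∑ d, ((∑ k, ∑ m, c i j k m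
            * (omUp l k q * omUp l m d - omUp l m q * omUp l k d) : ℝ) : ℂ)
          • cliff l d (s i j q) := by
  unfold Yop
  simp only [Fin.cons_zero, cliff_sum, cliff_smul, Finset.smul_sum, smul_smul]
  rw [sum_swap4 (fun p d i j => ∑ q, (((omUp l p d : ℝ) : ℂ)
    * ((∑ k, ∑ m, c i j k m * (omUp l k q * basisVec l p m
        - omUp l m q * basisVec l p k) : ℝ) : ℂ)) • cliff l d (s i j q))]
  refine Finset.sum_congr rfl fun i _ => Finset.sum_congr rfl fun j _ => ?_
  rw [sum_swap3 (fun p d q => (((omUp l p d : ℝ) : ℂ)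
    * ((∑ k, ∑ m, c i j k m * (omUp l k q * basisVec l p m
        - omUp l m q * basisVec l p k) : ℝ) : ℂ)) • cliff l d (s i j q)), Finset.sum_comm]
  refine Finset.sum_congr rfl fun q _ => Finset.sum_congr rfl fun d _ => ?_
  rw [← Finset.sum_smul]
  congr 1
  have real : ∑ p, omUp l p d * ∑ k, ∑ m, c i j k m * (omUp l k q * basisVec l p m
          - omUp l m q * basisVec l p k)
      = ∑ k, ∑ m, c i j k m * (omUp l k q * omUp l m d - omUp l m q * omUp l k d) := by
    have expand : ∀ p : Fin (2*l), omUp l p d * ∑ k, ∑ m, c i j k m * (omUp l k q * basisVec l p m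
            - omUp l m q * basisVec l p k)
        = ∑ k, ∑ m, omUp l p d * (c i j k m * (omUp l k q * basisVec l p m
            - omUp l m q * basisVec l p k)) := by
      intro p
      rw [Finset.mul_sum]
      exact Finset.sum_congr rfl fun k _ => Finset.mul_sum _ _ _
    rw [Finset.sum_congr rfl fun p _ => expand p,
      sum_swap3 (fun p k m => omUp l p d * (c i j k m * (omUp l k q * basisVec l p m
            - omUp l m q * basisVec l p k)))]
    refine Finset.sum_congr rfl fun k _ => Finset.sum_congr rfl fun m _ => ?_
    unfold basisVec
    simp only [Pi.single_apply]
    exact collapse_p2 l q d k m (c i j k m)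
  exact_mod_cast real


lemma stepA (l : ℕ) (R : Fin (2*l) → Fin (2*l) → Fin (2*l) → Fin (2*l) → ℝ)
    (h1 : ∀ i j k m, R i j k m = - R i j m k)
    (h2 : ∀ i j k m, R i j k m + R i k m j + R i m j k = 0)
    (h3 : ∀ i j k m, R i j k m = R j i k m) (φ : Pol l) :
    Yop l 0 (Yop l 1 (curvS l R φ)) = fun _ => ∑ i, ∑ j,
      ((-(up2 l (ric l R) i j) : ℝ) : ℂ) • cliff l i (cliff l j φ) := by
  have curv_eq : curvS l R φ = (Complex.I/2) • (fun w : Fin 2 → Fin (2*l) → ℝ =>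
      ∑ i, ∑ j, ∑ k, ∑ m,
      (((∑ a, ∑ b, omUp l i a * omUp l j b * R a b k m)
          * (w 0 k * w 1 m - w 0 m * w 1 k) : ℝ) : ℂ) • cliff l i (cliff l j φ)) := by
    funext w
    simp only [curvS, w2, Finset.sum_apply, Pi.smul_apply]
  rw [curv_eq, Yop_smul, Yop_smul]
  funext v
  rw [Pi.smul_apply]
  have hY1 : Yop l 1 (fun w : Fin 2 → Fin (2*l) → ℝ => ∑ i, ∑ j, ∑ k, ∑ m,
      (((∑ a, ∑ b, omUp l i a * omUp l j b * R a b k m)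
          * (w 0 k * w 1 m - w 0 m * w 1 k) : ℝ) : ℂ) • cliff l i (cliff l j φ))
      = fun u => ∑ i, ∑ j, ∑ q, ((∑ k, ∑ m, (∑ a, ∑ b, omUp l i a * omUp l j b * R a b k m)
            * (omUp l k q * u 0 m - omUp l m q * u 0 k) : ℝ) : ℂ)
          • cliff l q (cliff l i (cliff l j φ)) :=
    funext fun u => Ybig l (fun i j k m => ∑ a, ∑ b, omUp l i a * omUp l j b * R a b k m)
      (fun i j => cliff l i (cliff l j φ)) u
  rw [hY1]
  have hY2 : Yop l 0 (fun u => ∑ i, ∑ j, ∑ q,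
        ((∑ k, ∑ m, (∑ a, ∑ b, omUp l i a * omUp l j b * R a b k m)
            * (omUp l k q * u 0 m - omUp l m q * u 0 k) : ℝ) : ℂ)
          • cliff l q (cliff l i (cliff l j φ))) v
      = ∑ i, ∑ j, ∑ q, ∑ d, ((∑ k, ∑ m, (∑ a, ∑ b, omUp l i a * omUp l j b * R a b k m)
            * (omUp l k q * omUp l m d - omUp l m q * omUp l k d) : ℝ) : ℂ)
          • cliff l d (cliff l q (cliff l i (cliff l j φ))) :=
    Ysmall l (fun i j k m => ∑ a, ∑ b, omUp l i a * omUp l j b * R a b k m)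
      (fun i j q => cliff l q (cliff l i (cliff l j φ))) v
  rw [hY2]
  have coll : ∀ i j : Fin (2*l),
      ∑ q, ∑ d, ((∑ k, ∑ m, (∑ a, ∑ b, omUp l i a * omUp l j b * R a b k m)
            * (omUp l k q * omUp l m d - omUp l m q * omUp l k d) : ℝ) : ℂ)
          • cliff l d (cliff l q (cliff l i (cliff l j φ)))
        = ((Complex.I/2) * ((∑ q, ∑ d, (∑ k, ∑ m,
              (∑ a, ∑ b, omUp l i a * omUp l j b * R a b k m)
              * (omUp l k q * omUp l m d - omUp l m q * omUp l k d)) * om l q d : ℝ) : ℂ))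
            • cliff l i (cliff l j φ) := by
    intro i j
    refine antisym_collapse l (fun q d => ∑ k, ∑ m,
      (∑ a, ∑ b, omUp l i a * omUp l j b * R a b k m)
        * (omUp l k q * omUp l m d - omUp l m q * omUp l k d)) (fun q d => ?_)
      (cliff l i (cliff l j φ))
    rw [← Finset.sum_neg_distrib]
    refine Finset.sum_congr rfl fun k _ => ?_
    rw [← Finset.sum_neg_distrib]
    exact Finset.sum_congr rfl fun m _ => by ring
  rw [Finset.sum_congr rfl fun i _ => Finset.sum_congr rfl fun j _ => coll i j]
  rw [Finset.smul_sum]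
  refine Finset.sum_congr rfl fun i _ => ?_
  rw [Finset.smul_sum]
  refine Finset.sum_congr rfl fun j _ => ?_
  rw [Gident R h1 h2 h3 i j, smul_smul]
  congr 1
  push_cast
  linear_combination (up2 l (ric l R) i j : ℂ) * Complex.I_sq

lemma X0 (l : ℕ) (T : Pol l) (u : Fin 1 → Fin (2*l) → ℝ) :
    Xop l 0 (fun _ => T) u = -∑ i, ((u 0 i : ℝ) : ℂ) • cliff l i T := by
  unfold Xop cliffV
  rw [Fin.sum_univ_succ, Fin.sum_univ_zero]
  simp

lemma XX_const (l : ℕ) (T : Pol l) (v : Fin 2 → Fin (2*l) → ℝ) :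
    Xop l 1 (Xop l 0 (fun _ => T)) v
      = ∑ k, ∑ m, (((v 0 k * v 1 m - v 0 m * v 1 k) : ℝ) : ℂ) • cliff l k (cliff l m T) := by
  have hx := X0 l T
  unfold Xop cliffV
  rw [Fin.sum_univ_succ, Fin.sum_univ_succ, Fin.sum_univ_zero]
  have e0 : Fin.succAbove (0 : Fin 2) (0 : Fin 1) = 1 := by decide
  have e1 : Fin.succAbove (Fin.succ (0 : Fin 1)) (0 : Fin 1) = 0 := by decide
  have e2 : Fin.succ (0 : Fin 1) = 1 := by decide
  have e3 : Fin.succAbove (1 : Fin 2) (0 : Fin 1) = 0 := by decide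
  simp only [Fin.sum_univ_succ, Fin.sum_univ_zero, Fin.sum_univ_one, Fin.val_zero, pow_zero,
    one_smul, Fin.val_succ, pow_one, add_zero, zero_add, neg_smul, smul_neg, neg_neg,
    e0, e1, e2, e3, cliff_neg, cliff_sum, cliff_smul, Finset.sum_neg_distrib, Finset.smul_sum,
    smul_smul]
  rw [neg_add, neg_neg, neg_neg, ← Finset.sum_add_distrib]
  refine Finset.sum_congr rfl fun k _ => ?_
  rw [← Finset.sum_add_distrib]
  refine Finset.sum_congr rfl fun m _ => ?_
  rw [← add_smul]
  congr 1
  push_cast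
  ring



/-- `q^{20}(R^S φ) = (𝕚/(2l)) Σ σ^{ij} ω_{km} ε^k ∧ ε^m ⊗ e_{ij}·φ`. -/
theorem stmt_16 (l : ℕ) (hl : 2 ≤ l) (R : Fin (2*l) → Fin (2*l) → Fin (2*l) → Fin (2*l) → ℝ)
    (h1 : ∀ i j k m, R i j k m = - R i j m k)
    (h2 : ∀ i j k m, R i j k m + R i k m j + R i m j k = 0)
    (h3 : ∀ i j k m, R i j k m = R j i k m)
    (φ : Pol l) :
    q20 l (curvS l R φ)
      = (Complex.I / (2 * (l : ℂ))) • ∑ i, ∑ j, ∑ k, ∑ m,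
          w2 l (up2 l (ric l R) i j * om l k m) k m (cliff l i (cliff l j φ)) := by
  have hl0 : (l : ℂ) ≠ 0 := Nat.cast_ne_zero.mpr (by omega)
  funext v
  simp only [q20, XXYY, Pi.smul_apply]
  rw [stepA l R h1 h2 h3 φ]
  rw [XX_const l (∑ i, ∑ j, ((-(up2 l (ric l R) i j) : ℝ) : ℂ) • cliff l i (cliff l j φ)) v]
  rw [Finset.sum_comm]
  rw [antisym_collapse l (fun q d => v 0 d * v 1 q - v 0 q * v 1 d) (fun q d => by ring)]
  simp only [Finset.sum_apply, Pi.smul_apply, w2]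
  have hR : ∀ i j : Fin (2*l), (∑ k, ∑ m, ((up2 l (ric l R) i j * om l k m
        * (v 0 k * v 1 m - v 0 m * v 1 k) : ℝ) : ℂ) • cliff l i (cliff l j φ))
      = ((up2 l (ric l R) i j * ∑ k, ∑ m, om l k m * (v 0 k * v 1 m - v 0 m * v 1 k) : ℝ) : ℂ)
          • cliff l i (cliff l j φ) := by
    intro i j
    rw [fold2 (fun k m => up2 l (ric l R) i j * om l k m * (v 0 k * v 1 m - v 0 m * v 1 k))]
    congr 2
    rw [Finset.mul_sum]
    refine Finset.sum_congr rfl fun k _ => ?_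
    rw [Finset.mul_sum]
    exact Finset.sum_congr rfl fun m _ => by ring
  rw [Finset.sum_congr rfl fun i _ => Finset.sum_congr rfl fun j _ => hR i j]
  simp only [Finset.smul_sum, smul_smul]
  refine Finset.sum_congr rfl fun i _ => Finset.sum_congr rfl fun j _ => ?_
  congr 1
  have hAB : (∑ q, ∑ d, (v 0 d * v 1 q - v 0 q * v 1 d) * om l q d)
      = -∑ k, ∑ m, om l k m * (v 0 k * v 1 m - v 0 m * v 1 k) := by
    rw [← Finset.sum_neg_distrib]
    refine Finset.sum_congr rfl fun q _ => ?_
    rw [← Finset.sum_neg_distrib]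
    exact Finset.sum_congr rfl fun d _ => by ring
  rw [hAB]
  set σc := up2 l (ric l R) i j with hσ
  set B := ∑ k, ∑ m, om l k m * (v 0 k * v 1 m - v 0 m * v 1 k) with hB
  push_cast
  field_simp


end
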